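/- Let m be the normalized Lebesgue measure on [0,π/2]², ν the Haar probability measure on SU(2), and m₁ the normalized Lebesgue measure on the interval (0,1/2). Then for every t ∈ [0,1], the probability measure λ_{2,t} = t · G_*(m × ν × ν × m₁ × ν) + (1−t) · g_*(m × ν × ν) on M₄(ℂ) assigns measure zero to the set of separable matrices; equivalently, a bipartite state γ_AB on ℂ² ⊗ ℂ² with rank γ_AB = 2 and rank γ_A = 2 is almost surely entangled with respect to λ_{2,t}. -/

import Mathlib

open Matrix MeasureTheory Kronecker Metric
open scoped ComplexOrder ENNReal

noncomputable section

/-- Entrywise measurable-space structure on complex matrices. -/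
instance matrixMeasurableSpace {m n : Type*} : MeasurableSpace (Matrix m n ℂ) :=
  inferInstanceAs (MeasurableSpace (m → n → ℂ))

/-- The special unitary group `SU(n)` of `n × n` complex matrices. -/
abbrev SU (n : ℕ) := Matrix.specialUnitaryGroup (Fin n) ℂ

/-- `|v⟩⟨v|`, the rank-one matrix `v v*`. -/
def ketBra {d : ℕ} (v : Fin d → ℂ) : Matrix (Fin d) (Fin d) ℂ :=
  vecMulVec v (star v)

/-- A positive semidefinite matrix indexed by `(Fin dA) × (Fin dB)` is separable if it is
a finite positive combination of Kronecker products `|a⟩⟨a| ⊗ |b⟩⟨b|`. -/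
def MatrixSeparable {dA dB : ℕ} (γ : Matrix (Fin dA × Fin dB) (Fin dA × Fin dB) ℂ) : Prop :=
  ∃ (n : ℕ) (lam : Fin n → ℝ) (a : Fin n → Fin dA → ℂ) (b : Fin n → Fin dB → ℂ),
    (∀ i, 0 ≤ lam i) ∧
      γ = ∑ i, (lam i : ℂ) • (ketBra (a i) ⊗ₖ ketBra (b i))

/-- The Pauli matrices. -/
def σ1 : Matrix (Fin 2) (Fin 2) ℂ := !![0, 1; 1, 0]

def σ2 : Matrix (Fin 2) (Fin 2) ℂ := !![0, -Complex.I; Complex.I, 0]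

def σ3 : Matrix (Fin 2) (Fin 2) ℂ := !![1, 0; 0, -1]

/-- The linear map `Φ_{u,v} : M₂(ℂ) → M₂(ℂ)` determined by
`Φ(I) = I + (sin u)(sin v) σ₃`, `Φ(σ₁) = (cos u) σ₁`, `Φ(σ₂) = (cos v) σ₂`,
`Φ(σ₃) = (cos u)(cos v) σ₃`. -/
def PhiUV (u v : ℝ) (ρ : Matrix (Fin 2) (Fin 2) ℂ) : Matrix (Fin 2) (Fin 2) ℂ :=
  (ρ.trace / 2) • (1 + ((Real.sin u * Real.sin v : ℝ) : ℂ) • σ3)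
    + ((σ1 * ρ).trace / 2 * ((Real.cos u : ℝ) : ℂ)) • σ1
    + ((σ2 * ρ).trace / 2 * ((Real.cos v : ℝ) : ℂ)) • σ2
    + ((σ3 * ρ).trace / 2 * ((Real.cos u * Real.cos v : ℝ) : ℂ)) • σ3

/-- The normalized Lebesgue (uniform probability) measure on the rectangle `[0,π/2]²`. -/
def mRect : Measure (ℝ × ℝ) :=
  (ENNReal.ofReal ((Real.pi / 2) ^ 2))⁻¹ •
    volume.restrict (Set.Icc (0 : ℝ) (Real.pi / 2) ×ˢ Set.Icc (0 : ℝ) (Real.pi / 2))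

/-- `g((u,v),U,V)` is the Choi matrix of the CPT map `ρ ↦ V Φ_{u,v}(U* ρ U) V*`, i.e.
`(1/2) Σ_{j,k} E_{jk} ⊗ (V Φ_{u,v}(U* E_{jk} U) V*)`. -/
def gMap (p : (ℝ × ℝ) × SU 2 × SU 2) : Matrix (Fin 2 × Fin 2) (Fin 2 × Fin 2) ℂ :=
  (1 / 2 : ℂ) • ∑ j : Fin 2, ∑ k : Fin 2,
    Matrix.single j k (1 : ℂ) ⊗ₖ
      ((p.2.2 : Matrix (Fin 2) (Fin 2) ℂ) *
        PhiUV p.1.1 p.1.2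
          ((p.2.1 : Matrix (Fin 2) (Fin 2) ℂ)ᴴ * Matrix.single j k (1 : ℂ) *
            (p.2.1 : Matrix (Fin 2) (Fin 2) ℂ)) *
        (p.2.2 : Matrix (Fin 2) (Fin 2) ℂ)ᴴ)

/-- The positive semidefinite square root of `2ρ`, where `ρ = W diag(x, 1-x) W*`. -/
def sqrtTwoRho (x : ℝ) (W : SU 2) : Matrix (Fin 2) (Fin 2) ℂ :=
  (W : Matrix (Fin 2) (Fin 2) ℂ) *
    diagonal ![((Real.sqrt (2 * x) : ℝ) : ℂ), ((Real.sqrt (2 * (1 - x)) : ℝ) : ℂ)] *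
    (W : Matrix (Fin 2) (Fin 2) ℂ)ᴴ

/-- `G((u,v),U,V,x,W) = ((2ρ)^{1/2} ⊗ I₂) g((u,v),U,V) ((2ρ)^{1/2} ⊗ I₂)` with
`ρ = W diag(x, 1-x) W*`. -/
def GMap (p : ((ℝ × ℝ) × SU 2 × SU 2) × ℝ × SU 2) :
    Matrix (Fin 2 × Fin 2) (Fin 2 × Fin 2) ℂ :=
  (sqrtTwoRho p.2.1 p.2.2 ⊗ₖ (1 : Matrix (Fin 2) (Fin 2) ℂ)) * gMap p.1 *
    (sqrtTwoRho p.2.1 p.2.2 ⊗ₖ (1 : Matrix (Fin 2) (Fin 2) ℂ))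

/-- The normalized Lebesgue measure on the interval `(0, 1/2)`. -/
def mHalfOpen : Measure ℝ :=
  (ENNReal.ofReal (1 / 2 : ℝ))⁻¹ • volume.restrict (Set.Ioo (0 : ℝ) (1 / 2))

/-! ### Auxiliary lemmas -/

section Aux

open Complex

/-- The partial-transpose quadratic form. -/
def ptForm {dA dB : ℕ} (γ : Matrix (Fin dA × Fin dB) (Fin dA × Fin dB) ℂ)
    (x : Fin dA × Fin dB → ℂ) : ℂ :=
  ∑ p : Fin dA × Fin dB, ∑ q : Fin dA × Fin dB,
    (starRingEnd ℂ) (x p) * γ (p.1, q.2) (q.1, p.2) * x q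

lemma sum_rot {α β γ' : Type*} [Fintype α] [Fintype β] [Fintype γ'] (f : α → β → γ' → ℂ) :
    ∑ p, ∑ q, ∑ i, f p q i = ∑ i, ∑ p, ∑ q, f p q i :=
  (Finset.sum_congr rfl fun _ _ => Finset.sum_comm).trans Finset.sum_comm

lemma ptForm_ketBra {dA dB : ℕ} (a : Fin dA → ℂ) (b : Fin dB → ℂ)
    (x : Fin dA × Fin dB → ℂ) :
    ptForm (ketBra a ⊗ₖ ketBra b) x =
      (∑ p : Fin dA × Fin dB, (starRingEnd ℂ) (x p) * a p.1 * (starRingEnd ℂ) (b p.2)) *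
      (starRingEnd ℂ) (∑ p : Fin dA × Fin dB,
        (starRingEnd ℂ) (x p) * a p.1 * (starRingEnd ℂ) (b p.2)) := by
  simp only [ptForm, ketBra, kroneckerMap_apply, vecMulVec_apply, Pi.star_apply, map_sum,
    _root_.map_mul, RingHom.id_apply, Complex.conj_conj, Finset.sum_mul_sum]
  refine Finset.sum_congr rfl fun p _ => Finset.sum_congr rfl fun q _ => ?_
  simp only [RCLike.star_def]
  ring

lemma sep_ptForm_nonneg {dA dB : ℕ} (γ : Matrix (Fin dA × Fin dB) (Fin dA × Fin dB) ℂ)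
    (h : MatrixSeparable γ) (x : Fin dA × Fin dB → ℂ) : 0 ≤ (ptForm γ x).re := by
  obtain ⟨n, lam, a, b, hlam, rfl⟩ := h
  have hexp : ptForm (∑ i, (lam i : ℂ) • (ketBra (a i) ⊗ₖ ketBra (b i))) x
      = ∑ i, (lam i : ℂ) * ptForm (ketBra (a i) ⊗ₖ ketBra (b i)) x := by
    simp only [ptForm, Matrix.sum_apply, Matrix.smul_apply, smul_eq_mul, Finset.mul_sum,
      Finset.sum_mul]
    rw [sum_rot]
    refine Finset.sum_congr rfl fun i _ => Finset.sum_congr rfl fun p _ =>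
      Finset.sum_congr rfl fun q _ => ?_
    ring
  rw [hexp, Complex.re_sum]
  refine Finset.sum_nonneg fun i _ => ?_
  rw [ptForm_ketBra]
  set z := (∑ p : Fin dA × Fin dB, (starRingEnd ℂ) (x p) * a i p.1 * (starRingEnd ℂ) (b i p.2))
  rw [Complex.mul_conj, ← Complex.ofReal_mul, Complex.ofReal_re]
  exact mul_nonneg (hlam i) (Complex.normSq_nonneg z)

lemma kron_conjTranspose {l m n p : Type*} [Fintype m] [Fintype p]
    (A : Matrix l m ℂ) (B : Matrix n p ℂ) : (A ⊗ₖ B)ᴴ = Aᴴ ⊗ₖ Bᴴ := by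
  ext ⟨i, j⟩ ⟨k, l⟩
  simp [conjTranspose_apply, kroneckerMap_apply]

lemma mul_ketBra_mul {d : ℕ} (M : Matrix (Fin d) (Fin d) ℂ) (a : Fin d → ℂ) :
    M * ketBra a * Mᴴ = ketBra (M *ᵥ a) := by
  ext i j
  simp only [ketBra, Matrix.mul_apply, vecMulVec_apply, Pi.star_apply, conjTranspose_apply,
    mulVec, dotProduct, RCLike.star_def, map_sum, _root_.map_mul, Finset.sum_mul, Finset.mul_sum]
  refine Finset.sum_congr rfl fun p _ => Finset.sum_congr rfl fun q _ => ?_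
  ring

lemma sep_conj {dA dB : ℕ} (γ : Matrix (Fin dA × Fin dB) (Fin dA × Fin dB) ℂ)
    (M : Matrix (Fin dA) (Fin dA) ℂ) (N : Matrix (Fin dB) (Fin dB) ℂ)
    (h : MatrixSeparable γ) : MatrixSeparable ((M ⊗ₖ N) * γ * (M ⊗ₖ N)ᴴ) := by
  obtain ⟨n, lam, a, b, hlam, rfl⟩ := h
  refine ⟨n, lam, fun i => M *ᵥ a i, fun i => N *ᵥ b i, hlam, ?_⟩
  rw [Finset.mul_sum, Finset.sum_mul]
  refine Finset.sum_congr rfl fun i _ => ?_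
  rw [mul_smul_comm, smul_mul_assoc, kron_conjTranspose, ← mul_kronecker_mul,
    ← mul_kronecker_mul, mul_ketBra_mul, mul_ketBra_mul]

/-- Borel structure agreement for the matrix space. -/
instance matrixBorelSpace :
    BorelSpace (Matrix (Fin 2 × Fin 2) (Fin 2 × Fin 2) ℂ) :=
  inferInstanceAs (BorelSpace ((Fin 2 × Fin 2) → (Fin 2 × Fin 2) → ℂ))

lemma closure_sep_conj (M N : Matrix (Fin 2) (Fin 2) ℂ)
    {γ : Matrix (Fin 2 × Fin 2) (Fin 2 × Fin 2) ℂ}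
    (h : γ ∈ closure {γ | MatrixSeparable γ}) :
    (M ⊗ₖ N) * γ * (M ⊗ₖ N)ᴴ ∈ closure {γ | MatrixSeparable γ} := by
  have hcont : Continuous fun γ : Matrix (Fin 2 × Fin 2) (Fin 2 × Fin 2) ℂ =>
      (M ⊗ₖ N) * γ * (M ⊗ₖ N)ᴴ :=
    (continuous_const.matrix_mul continuous_id).matrix_mul continuous_const
  have hmap : Set.MapsTo (fun γ : Matrix (Fin 2 × Fin 2) (Fin 2 × Fin 2) ℂ =>
      (M ⊗ₖ N) * γ * (M ⊗ₖ N)ᴴ) {γ | MatrixSeparable γ} {γ | MatrixSeparable γ} :=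
    fun γ hγ => sep_conj γ M N hγ
  exact map_mem_closure (f := fun γ : Matrix (Fin 2 × Fin 2) (Fin 2 × Fin 2) ℂ =>
    (M ⊗ₖ N) * γ * (M ⊗ₖ N)ᴴ) hcont h hmap

lemma closure_ptForm_nonneg {γ : Matrix (Fin 2 × Fin 2) (Fin 2 × Fin 2) ℂ}
    (h : γ ∈ closure {γ | MatrixSeparable γ}) (x : Fin 2 × Fin 2 → ℂ) :
    0 ≤ (ptForm γ x).re := by
  have hcont : Continuous fun γ : Matrix (Fin 2 × Fin 2) (Fin 2 × Fin 2) ℂ =>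
      (ptForm γ x).re := by
    refine Complex.continuous_re.comp ?_
    refine continuous_finset_sum _ fun p _ => continuous_finset_sum _ fun q _ => ?_
    exact (continuous_const.mul (continuous_id.matrix_elem (p.1, q.2) (q.1, p.2))).mul
      continuous_const
  have hclosed : IsClosed {γ : Matrix (Fin 2 × Fin 2) (Fin 2 × Fin 2) ℂ |
      0 ≤ (ptForm γ x).re} := isClosed_le continuous_const hcont
  exact closure_minimal (fun γ hγ => sep_ptForm_nonneg γ hγ x) hclosed h

set_option maxHeartbeats 2000000 in
lemma gMap_conj (u v : ℝ) (U V : SU 2) :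
    gMap ((u, v), U, V) =
      ((((U : Matrix (Fin 2) (Fin 2) ℂ)ᴴ)ᵀ) ⊗ₖ (V : Matrix (Fin 2) (Fin 2) ℂ)) *
        gMap ((u, v), 1, 1) *
      ((((U : Matrix (Fin 2) (Fin 2) ℂ)ᴴ)ᵀ) ⊗ₖ (V : Matrix (Fin 2) (Fin 2) ℂ))ᴴ := by
  ext ⟨i1, i2⟩ ⟨j1, j2⟩
  simp only [gMap, PhiUV, σ1, σ2, σ3, Matrix.smul_apply, Matrix.sum_apply, Matrix.mul_apply,
    kroneckerMap_apply, Matrix.add_apply, Matrix.one_apply, Matrix.trace, Matrix.diag,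
    Fin.sum_univ_two, Fintype.sum_prod_type, Matrix.single, Matrix.of_apply,
    Matrix.transpose_apply, Matrix.conjTranspose_apply, OneMemClass.coe_one,
    Matrix.cons_val', Matrix.cons_val_zero, Matrix.cons_val_one, Matrix.head_cons,
    Matrix.head_fin_const, Matrix.empty_val', Matrix.cons_val_fin_one, smul_eq_mul,
    _root_.map_mul, _root_.map_one, map_zero, star_zero, star_one, mul_one, mul_zero, one_mul,
    zero_mul, add_zero, zero_add, map_sum, Complex.star_def]
  fin_cases i1 <;> fin_cases i2 <;> fin_cases j1 <;> fin_cases j2 <;>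
    simp <;> ring

def xab (α β : ℝ) : Fin 2 × Fin 2 → ℂ :=
  fun p => if p = (0, 1) then (α : ℂ) else if p = (1, 0) then (β : ℂ) else 0

set_option maxHeartbeats 2000000 in
lemma ptForm_base (u v α β : ℝ) :
    ptForm (gMap ((u, v), 1, 1)) (xab α β) =
      (((α ^ 2 * (1 - Real.sin u * Real.sin v - Real.cos u * Real.cos v)
        + 2 * α * β * (Real.cos u + Real.cos v)
        + β ^ 2 * (1 + Real.sin u * Real.sin v - Real.cos u * Real.cos v)) / 4 : ℝ) : ℂ) := by
  simp only [ptForm, xab, gMap, PhiUV, σ1, σ2, σ3, Matrix.smul_apply, Matrix.sum_apply,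
    Matrix.mul_apply, kroneckerMap_apply, Matrix.add_apply, Matrix.one_apply, Matrix.trace,
    Matrix.diag, Fin.sum_univ_two, Fintype.sum_prod_type, Matrix.single, Matrix.of_apply,
    Matrix.conjTranspose_apply, OneMemClass.coe_one, Matrix.cons_val', Matrix.cons_val_zero,
    Matrix.cons_val_one, Matrix.head_cons, Matrix.head_fin_const, Matrix.empty_val',
    Matrix.cons_val_fin_one, smul_eq_mul, _root_.map_mul, _root_.map_one, map_zero, star_zero,
    star_one, mul_one, mul_zero, one_mul, zero_mul, add_zero, zero_add, map_sum,
    Complex.star_def, Complex.conj_ofReal, Prod.mk.injEq]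
  norm_num
  ring_nf
  simp only [Complex.I_sq]
  ring

set_option maxHeartbeats 1000000 in
lemma key_real (u v : ℝ) (hu : u ∈ Set.Icc 0 (Real.pi/2)) (hv : v ∈ Set.Icc 0 (Real.pi/2))
    (hQ : ∀ α β : ℝ, 0 ≤ (α ^ 2 * (1 - Real.sin u * Real.sin v - Real.cos u * Real.cos v)
        + 2 * α * β * (Real.cos u + Real.cos v)
        + β ^ 2 * (1 + Real.sin u * Real.sin v - Real.cos u * Real.cos v)) / 4) :
    Real.cos u * Real.cos v = 0 := by
  have key : ∀ s s' c c' : ℝ, 0 ≤ s → 0 ≤ s' → 0 ≤ c → 0 ≤ c' → c ≤ 1 → c' ≤ 1 →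
      s^2 + c^2 = 1 → s'^2 + c'^2 = 1 →
      (∀ α β : ℝ, 0 ≤ (α ^ 2 * (1 - s * s' - c * c')
        + 2 * α * β * (c + c') + β ^ 2 * (1 + s * s' - c * c')) / 4) → c * c' = 0 := by
    intro s s' c c' hs hs' hc hc' hc1 hc1' hpy hpy' hQ
    have hcc : 0 ≤ c * c' := mul_nonneg hc hc'
    by_contra hne
    have hpos : 0 < c * c' := lt_of_le_of_ne hcc (Ne.symm hne)
    have q1 := hQ 0 1
    have q2 := hQ (1 + s*s' - c*c') (-(c + c'))
    have q3 := hQ 1 (-1)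
    have hABD : (1 - s*s' - c*c') * (1 + s*s' - c*c') - (c+c')^2 = -(4*(c*c')) := by
      have h : (s*s')^2 = (1-c^2)*(1-c'^2) := by
        rw [mul_pow]
        have e1 : s^2 = 1 - c^2 := by linarith
        have e2 : s'^2 = 1 - c'^2 := by linarith
        rw [e1, e2]
      linear_combination -h
    have h4 : 0 ≤ (1 + s*s' - c*c') * ((1 - s*s' - c*c') * (1 + s*s' - c*c') - (c+c')^2) := by
      nlinarith [q2]
    rw [hABD] at h4
    have hBnn : 0 ≤ 1 + s*s' - c*c' := by nlinarith [q1]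
    have hBle : 1 + s*s' - c*c' ≤ 0 := by nlinarith [h4, hpos]
    have hB : 1 + s*s' - c*c' = 0 := le_antisymm hBle hBnn
    have hccle : c * c' ≤ 1 := by nlinarith [hc, hc', hc1, hc1']
    have hss0 : s * s' = 0 := by nlinarith [mul_nonneg hs hs']
    have hcc1 : c * c' = 1 := by linarith
    have hceq : c = 1 := by nlinarith [hc, hc', hc1, hc1']
    have hceq' : c' = 1 := by nlinarith [hc, hc', hc1, hc1']
    nlinarith [q3]
  exact key _ _ _ _
    (Real.sin_nonneg_of_nonneg_of_le_pi hu.1 (by linarith [hu.2, Real.pi_pos]))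
    (Real.sin_nonneg_of_nonneg_of_le_pi hv.1 (by linarith [hv.2, Real.pi_pos]))
    (Real.cos_nonneg_of_mem_Icc ⟨by linarith [hu.1, Real.pi_pos], hu.2⟩)
    (Real.cos_nonneg_of_mem_Icc ⟨by linarith [hv.1, Real.pi_pos], hv.2⟩)
    (Real.cos_le_one u) (Real.cos_le_one v)
    (Real.sin_sq_add_cos_sq u) (Real.sin_sq_add_cos_sq v) hQ

lemma su_star_mul (U : SU 2) :
    (U : Matrix (Fin 2) (Fin 2) ℂ)ᴴ * (U : Matrix (Fin 2) (Fin 2) ℂ) = 1 := by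
  have h := (Matrix.mem_specialUnitaryGroup_iff.mp U.2).1
  have := Matrix.mem_unitaryGroup_iff'.mp h
  rwa [Matrix.star_eq_conjTranspose] at this

lemma su_mul_star (U : SU 2) :
    (U : Matrix (Fin 2) (Fin 2) ℂ) * (U : Matrix (Fin 2) (Fin 2) ℂ)ᴴ = 1 := by
  have h := (Matrix.mem_specialUnitaryGroup_iff.mp U.2).1
  have := Matrix.mem_unitaryGroup_iff.mp h
  rwa [Matrix.star_eq_conjTranspose] at this

/-- Key pointwise fact: if `gMap ((u,v),U,V)` is in the closure of the separable matrices and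
`u, v ∈ [0, π/2]`, then `cos u * cos v = 0`. -/
lemma gMap_closure_implies (u v : ℝ) (hu : u ∈ Set.Icc 0 (Real.pi/2))
    (hv : v ∈ Set.Icc 0 (Real.pi/2)) (U V : SU 2)
    (h : gMap ((u, v), U, V) ∈ closure {γ | MatrixSeparable γ}) :
    Real.cos u * Real.cos v = 0 := by
  set Um : Matrix (Fin 2) (Fin 2) ℂ := (U : Matrix (Fin 2) (Fin 2) ℂ) with hUm
  set Vm : Matrix (Fin 2) (Fin 2) ℂ := (V : Matrix (Fin 2) (Fin 2) ℂ) with hVm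
  set Mc : Matrix (Fin 2) (Fin 2) ℂ := (Umᴴ)ᵀ with hMc
  -- conjugate back to the base Choi matrix
  have h1 : (Umᵀ ⊗ₖ Vmᴴ) * (Mc ⊗ₖ Vm) = 1 := by
    rw [← mul_kronecker_mul, hMc, ← Matrix.transpose_mul, su_star_mul U, su_star_mul V,
      Matrix.transpose_one, Matrix.one_kronecker_one]
  have h2 : (Mc ⊗ₖ Vm)ᴴ * (Umᵀ ⊗ₖ Vmᴴ)ᴴ = 1 := by
    rw [← Matrix.conjTranspose_mul, h1, Matrix.conjTranspose_one]
  have hC0 : gMap ((u, v), 1, 1) =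
      (Umᵀ ⊗ₖ Vmᴴ) * gMap ((u, v), U, V) * (Umᵀ ⊗ₖ Vmᴴ)ᴴ := by
    rw [gMap_conj u v U V]
    simp only [← hUm, ← hVm, ← hMc, ← mul_assoc]
    rw [h1, one_mul, mul_assoc, h2, mul_one]
  have hmem : gMap ((u, v), 1, 1) ∈ closure {γ | MatrixSeparable γ} := by
    rw [hC0]; exact closure_sep_conj _ _ h
  refine key_real u v hu hv fun α β => ?_
  have := closure_ptForm_nonneg hmem (xab α β)
  rwa [ptForm_base, Complex.ofReal_re] at this

/-- Pointwise fact for `GMap`. -/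
lemma GMap_closure_implies (u v : ℝ) (hu : u ∈ Set.Icc 0 (Real.pi/2))
    (hv : v ∈ Set.Icc 0 (Real.pi/2)) (U V : SU 2) (x : ℝ) (hx : x ∈ Set.Ioo (0:ℝ) (1/2))
    (W : SU 2)
    (h : GMap (((u, v), U, V), x, W) ∈ closure {γ | MatrixSeparable γ}) :
    Real.cos u * Real.cos v = 0 := by
  set Wm : Matrix (Fin 2) (Fin 2) ℂ := (W : Matrix (Fin 2) (Fin 2) ℂ) with hWm
  set d : Fin 2 → ℂ := ![((Real.sqrt (2 * x) : ℝ) : ℂ), ((Real.sqrt (2 * (1 - x)) : ℝ) : ℂ)]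
    with hd
  set e : Fin 2 → ℂ := ![(((Real.sqrt (2 * x))⁻¹ : ℝ) : ℂ), (((Real.sqrt (2 * (1 - x)))⁻¹ : ℝ) : ℂ)]
    with he
  set Minv : Matrix (Fin 2) (Fin 2) ℂ := Wm * diagonal e * Wmᴴ with hMinv
  have hde : diagonal e * diagonal d = 1 := by
    rw [diagonal_mul_diagonal]
    have h1 : Real.sqrt (2 * x) ≠ 0 := by
      refine ne_of_gt (Real.sqrt_pos.mpr (by linarith [hx.1]))
    have h2 : Real.sqrt (2 * (1 - x)) ≠ 0 := by
      refine ne_of_gt (Real.sqrt_pos.mpr (by linarith [hx.2]))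
    have : e * d = 1 := by
      funext i
      fin_cases i
      · simp only [Fin.mk_zero, Fin.mk_one, Pi.mul_apply, he, hd, Matrix.cons_val_zero, Pi.one_apply]
        rw [← Complex.ofReal_mul, inv_mul_cancel₀ h1, Complex.ofReal_one]
      · simp only [Fin.mk_zero, Fin.mk_one, Pi.mul_apply, he, hd, Matrix.cons_val_one, Matrix.head_cons, Matrix.cons_val_zero, Pi.one_apply]
        rw [← Complex.ofReal_mul, inv_mul_cancel₀ h2, Complex.ofReal_one]
    have h' : (fun i => e i * d i) = (1 : Fin 2 → ℂ) := this
    rw [h']; exact Matrix.diagonal_one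
  have hed : diagonal d * diagonal e = 1 := by
    rw [diagonal_mul_diagonal]
    have h1 : Real.sqrt (2 * x) ≠ 0 := ne_of_gt (Real.sqrt_pos.mpr (by linarith [hx.1]))
    have h2 : Real.sqrt (2 * (1 - x)) ≠ 0 := ne_of_gt (Real.sqrt_pos.mpr (by linarith [hx.2]))
    have : d * e = 1 := by
      funext i
      fin_cases i
      · simp only [Fin.mk_zero, Fin.mk_one, Pi.mul_apply, he, hd, Matrix.cons_val_zero, Pi.one_apply]
        rw [← Complex.ofReal_mul, mul_inv_cancel₀ h1, Complex.ofReal_one]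
      · simp only [Fin.mk_zero, Fin.mk_one, Pi.mul_apply, he, hd, Matrix.cons_val_one, Matrix.head_cons, Matrix.cons_val_zero, Pi.one_apply]
        rw [← Complex.ofReal_mul, mul_inv_cancel₀ h2, Complex.ofReal_one]
    have h' : (fun i => d i * e i) = (1 : Fin 2 → ℂ) := this
    rw [h']; exact Matrix.diagonal_one
  have hMs : sqrtTwoRho x W = Wm * diagonal d * Wmᴴ := rfl
  have hW1 : Wmᴴ * Wm = 1 := su_star_mul W
  have hW2 : Wm * Wmᴴ = 1 := su_mul_star W
  have hinvmul : Minv * sqrtTwoRho x W = 1 := by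
    rw [hMinv, hMs]
    simp only [mul_assoc]
    rw [← mul_assoc Wmᴴ Wm, hW1, one_mul, ← mul_assoc (diagonal e) (diagonal d), hde,
      one_mul, hW2]
  have hmulinv : sqrtTwoRho x W * Minv = 1 := by
    rw [hMs, hMinv]
    simp only [mul_assoc]
    rw [← mul_assoc Wmᴴ Wm, hW1, one_mul, ← mul_assoc (diagonal d) (diagonal e), hed,
      one_mul, hW2]
  have hMinvH : Minvᴴ = Minv := by
    rw [hMinv, Matrix.conjTranspose_mul, Matrix.conjTranspose_mul,
      Matrix.conjTranspose_conjTranspose, Matrix.diagonal_conjTranspose]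
    have : star e = e := by
      funext i; fin_cases i <;> simp [he, Complex.conj_ofReal]
    rw [this, mul_assoc]
  have hg : gMap ((u, v), U, V) =
      (Minv ⊗ₖ (1 : Matrix (Fin 2) (Fin 2) ℂ)) * GMap (((u, v), U, V), x, W) *
      (Minv ⊗ₖ (1 : Matrix (Fin 2) (Fin 2) ℂ))ᴴ := by
    rw [GMap, kron_conjTranspose, hMinvH, Matrix.conjTranspose_one]
    simp only [← mul_assoc]
    rw [← mul_kronecker_mul, hinvmul, one_mul, Matrix.one_kronecker_one, one_mul]
    rw [mul_assoc, ← mul_kronecker_mul, hmulinv, one_mul, Matrix.one_kronecker_one, mul_one]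
  have : gMap ((u, v), U, V) ∈ closure {γ | MatrixSeparable γ} := by
    rw [hg]; exact closure_sep_conj _ _ h
  exact gMap_closure_implies u v hu hv U V this

lemma cos_zero_set_countable : {y : ℝ | Real.cos y = 0}.Countable := by
  have hsub : {y : ℝ | Real.cos y = 0} ⊆
      Set.range (fun k : ℤ => (2 * (k : ℝ) + 1) * Real.pi / 2) := by
    intro y hy
    obtain ⟨k, hk⟩ := Real.cos_eq_zero_iff.mp hy
    exact ⟨k, hk.symm⟩
  exact (Set.countable_range _).mono hsub

lemma Zset_null : (volume : Measure (ℝ × ℝ)) {q : ℝ × ℝ | Real.cos q.1 * Real.cos q.2 = 0} = 0 := by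
  have hsub : {q : ℝ × ℝ | Real.cos q.1 * Real.cos q.2 = 0} ⊆
      ({y : ℝ | Real.cos y = 0} ×ˢ (Set.univ : Set ℝ)) ∪
      ((Set.univ : Set ℝ) ×ˢ {y : ℝ | Real.cos y = 0}) := by
    intro q hq
    rcases mul_eq_zero.mp hq with h | h
    · exact Or.inl ⟨h, trivial⟩
    · exact Or.inr ⟨trivial, h⟩
  refine measure_mono_null hsub (measure_union_null ?_ ?_)
  · rw [show (volume : Measure (ℝ × ℝ)) = (volume : Measure ℝ).prod volume from rfl,
      Measure.prod_prod, cos_zero_set_countable.measure_zero, zero_mul]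
  · rw [show (volume : Measure (ℝ × ℝ)) = (volume : Measure ℝ).prod volume from rfl,
      Measure.prod_prod, cos_zero_set_countable.measure_zero, mul_zero]

end Aux

lemma mRect_finite : IsFiniteMeasure mRect := by
  constructor
  rw [mRect, Measure.smul_apply, Measure.restrict_apply MeasurableSet.univ, Set.univ_inter,
    smul_eq_mul]
  refine ENNReal.mul_lt_top ?_ ?_
  · exact ENNReal.inv_lt_top.mpr (ENNReal.ofReal_pos.mpr (by positivity))
  · rw [show ((volume : Measure (ℝ × ℝ))) = (volume : Measure ℝ).prod volume from rfl,
      Measure.prod_prod, Real.volume_Icc]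
    exact ENNReal.mul_lt_top ENNReal.ofReal_lt_top ENNReal.ofReal_lt_top

lemma mHalfOpen_finite : IsFiniteMeasure mHalfOpen := by
  constructor
  rw [mHalfOpen, Measure.smul_apply, Measure.restrict_apply MeasurableSet.univ, Set.univ_inter,
    smul_eq_mul]
  refine ENNReal.mul_lt_top ?_ ?_
  · exact ENNReal.inv_lt_top.mpr (ENNReal.ofReal_pos.mpr (by norm_num))
  · rw [Real.volume_Ioo]; exact ENNReal.ofReal_lt_top

set_option synthInstance.maxHeartbeats 1000000 in
/-- For every `t ∈ [0,1]`, the probability measure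
`λ_{2,t} = t • G_*(m × ν × ν × m₁ × ν) + (1-t) • g_*(m × ν × ν)` on `M₄(ℂ)` assigns measure zero
to the set of separable matrices: a bipartite state on `ℂ² ⊗ ℂ²` of rank 2 whose reduced density
matrix `γ_A` has rank 2 is almost surely entangled. -/
theorem separable_measure_zero_rank_two_qubit
    (ν : Measure (SU 2)) [IsProbabilityMeasure ν] [ν.IsMulLeftInvariant]
    (t : ℝ) (ht : t ∈ Set.Icc (0 : ℝ) 1) :
    (ENNReal.ofReal t •
        Measure.map GMap ((mRect.prod (ν.prod ν)).prod (mHalfOpen.prod ν)) +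
      ENNReal.ofReal (1 - t) • Measure.map gMap (mRect.prod (ν.prod ν)))
      {γ | MatrixSeparable γ} = 0 := by
  classical
  haveI := mRect_finite
  haveI := mHalfOpen_finite
  haveI : SFinite (ν.prod ν) := inferInstance
  haveI : SFinite (mHalfOpen.prod ν) := inferInstance
  set Sep : Set (Matrix (Fin 2 × Fin 2) (Fin 2 × Fin 2) ℂ) := {γ | MatrixSeparable γ} with hSep
  set R : Set (ℝ × ℝ) := Set.Icc (0:ℝ) (Real.pi/2) ×ˢ Set.Icc (0:ℝ) (Real.pi/2) with hR
  have hRm : MeasurableSet R := (measurableSet_Icc.prod measurableSet_Icc)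
  set Z : Set (ℝ × ℝ) := {q : ℝ × ℝ | Real.cos q.1 * Real.cos q.2 = 0} with hZ
  have hZm : MeasurableSet Z := by
    have : IsClosed Z := isClosed_eq
      ((Real.continuous_cos.comp continuous_fst).mul
        (Real.continuous_cos.comp continuous_snd)) continuous_const
    exact this.measurableSet
  have hmRectZ : mRect Z = 0 := by
    rw [mRect, Measure.smul_apply, Measure.restrict_apply hZm]
    rw [measure_mono_null Set.inter_subset_left Zset_null, smul_zero]
  have hmRectC : mRect Rᶜ = 0 := by
    rw [mRect, Measure.smul_apply, Measure.restrict_apply hRm.compl,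
      Set.compl_inter_self, measure_empty, smul_zero]
  have hTm : MeasurableSet (closure Sep) := isClosed_closure.measurableSet
  -- the gMap part
  set μ : Measure ((ℝ × ℝ) × SU 2 × SU 2) := mRect.prod (ν.prod ν) with hμ
  have hz1 : μ {p : (ℝ × ℝ) × SU 2 × SU 2 | Real.cos p.1.1 * Real.cos p.1.2 = 0} = 0 := by
    have hset : {p : (ℝ × ℝ) × SU 2 × SU 2 | Real.cos p.1.1 * Real.cos p.1.2 = 0}
        = Z ×ˢ (Set.univ : Set (SU 2 × SU 2)) := by
      ext ⟨q, w⟩; simp [hZ]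
    rw [hset, hμ, Measure.prod_prod, hmRectZ, zero_mul]
  have hz2 : μ ((R ×ˢ (Set.univ : Set (SU 2 × SU 2)))ᶜ) = 0 := by
    have hset : (R ×ˢ (Set.univ : Set (SU 2 × SU 2)))ᶜ
        = Rᶜ ×ˢ (Set.univ : Set (SU 2 × SU 2)) := by
      ext ⟨q, w⟩; simp
    rw [hset, hμ, Measure.prod_prod, hmRectC, zero_mul]
  have hg : Measure.map gMap μ Sep = 0 := by
    by_cases hm : AEMeasurable gMap μ
    · refine le_antisymm ?_ zero_le
      have step1 : Measure.map gMap μ Sep ≤ μ (gMap ⁻¹' closure Sep) := by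
        rw [← Measure.map_apply_of_aemeasurable hm hTm]
        exact measure_mono subset_closure
      refine le_trans step1 ?_
      have hsub : gMap ⁻¹' closure Sep ⊆
          {p : (ℝ × ℝ) × SU 2 × SU 2 | Real.cos p.1.1 * Real.cos p.1.2 = 0} ∪
          (R ×ˢ (Set.univ : Set (SU 2 × SU 2)))ᶜ := by
        rintro ⟨⟨u, v⟩, U, V⟩ hp
        by_cases hRmem : (u, v) ∈ R
        · exact Or.inl (gMap_closure_implies u v hRmem.1 hRmem.2 U V hp)
        · exact Or.inr (by simp [hRmem])
      refine le_trans (measure_mono hsub) ?_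
      refine le_trans (measure_union_le _ _) ?_
      rw [hz1, hz2, add_zero]
    · rw [Measure.map_of_not_aemeasurable hm]
      simp
  -- the GMap part
  set μG : Measure (((ℝ × ℝ) × SU 2 × SU 2) × ℝ × SU 2) :=
    μ.prod (mHalfOpen.prod ν) with hμG
  have hG : Measure.map GMap μG Sep = 0 := by
    by_cases hm : AEMeasurable GMap μG
    · refine le_antisymm ?_ zero_le
      have step1 : Measure.map GMap μG Sep ≤ μG (GMap ⁻¹' closure Sep) := by
        rw [← Measure.map_apply_of_aemeasurable hm hTm]
        exact measure_mono subset_closure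
      refine le_trans step1 ?_
      set bad : Set (((ℝ × ℝ) × SU 2 × SU 2) × ℝ × SU 2) :=
        {p | Real.cos p.1.1.1 * Real.cos p.1.1.2 = 0} with hbad
      set R1 : Set ((ℝ × ℝ) × SU 2 × SU 2) := R ×ˢ (Set.univ : Set (SU 2 × SU 2)) with hR1
      set R2 : Set (ℝ × SU 2) := Set.Ioo (0:ℝ) (1/2) ×ˢ (Set.univ : Set (SU 2)) with hR2
      have hsub : GMap ⁻¹' closure Sep ⊆
          bad ∪ ((R1ᶜ ×ˢ (Set.univ : Set (ℝ × SU 2))) ∪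
            ((Set.univ : Set ((ℝ × ℝ) × SU 2 × SU 2)) ×ˢ R2ᶜ)) := by
        rintro ⟨⟨⟨u, v⟩, U, V⟩, x, W⟩ hp
        by_cases hRmem : (u, v) ∈ R
        · by_cases hxmem : x ∈ Set.Ioo (0:ℝ) (1/2)
          · exact Or.inl (GMap_closure_implies u v hRmem.1 hRmem.2 U V x hxmem W hp)
          · exact Or.inr (Or.inr ⟨trivial, fun hmem => hxmem hmem.1⟩)
        · exact Or.inr (Or.inl ⟨fun hmem => hRmem hmem.1, trivial⟩)
      refine le_trans (measure_mono hsub) ?_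
      refine le_trans (measure_union_le _ _) ?_
      have hbad0 : μG bad = 0 := by
        have hset : bad = {p : (ℝ × ℝ) × SU 2 × SU 2 |
            Real.cos p.1.1 * Real.cos p.1.2 = 0} ×ˢ (Set.univ : Set (ℝ × SU 2)) := by
          ext ⟨q, w⟩; simp [hbad]
        rw [hset, hμG, Measure.prod_prod, hz1, zero_mul]
      have hrest : μG ((R1ᶜ ×ˢ (Set.univ : Set (ℝ × SU 2))) ∪
          ((Set.univ : Set ((ℝ × ℝ) × SU 2 × SU 2)) ×ˢ R2ᶜ)) = 0 := by
        refine measure_union_null ?_ ?_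
        · rw [hμG, Measure.prod_prod, hR1, hz2, zero_mul]
        · rw [hμG, Measure.prod_prod]
          have hR2c : (mHalfOpen.prod ν) R2ᶜ = 0 := by
            have hset : R2ᶜ = (Set.Ioo (0:ℝ) (1/2))ᶜ ×ˢ (Set.univ : Set (SU 2)) := by
              ext ⟨y, w⟩; simp [hR2]
            rw [hset, Measure.prod_prod, mHalfOpen, Measure.smul_apply,
              Measure.restrict_apply measurableSet_Ioo.compl,
              Set.compl_inter_self, measure_empty, smul_zero, zero_mul]
          rw [hR2c, mul_zero]
      rw [hbad0, hrest, add_zero]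
    · rw [Measure.map_of_not_aemeasurable hm]
      simp
  rw [Measure.add_apply, Measure.smul_apply, Measure.smul_apply, hg, hG, smul_zero, smul_zero,
    add_zero]
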